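/- arXiv:2602.12374 — 4 statements merged into one kernel-verified Lean document; each statement's English description precedes it below -/
import Mathlib

section
/- If a finite graph G contains no induced subgraph isomorphic to K_{1,3} (the claw), then γ(G) = i(G). -/
open SimpleGraph

/-- `D` is a dominating set: every vertex outside `D` has a neighbor in `D`. -/
def IsDominating {V : Type*} (G : SimpleGraph V) (D : Set V) : Prop :=
  ∀ v ∉ D, ∃ u ∈ D, G.Adj u v

/-- `S` is an independent set. -/
def IsIndepSet {V : Type*} (G : SimpleGraph V) (S : Set V) : Prop :=
  ∀ u ∈ S, ∀ v ∈ S, ¬ G.Adj u v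

/-- `S` is a maximal independent set. -/
def IsMaxIndep {V : Type*} (G : SimpleGraph V) (S : Set V) : Prop :=
  _root_.IsIndepSet G S ∧ ∀ T, _root_.IsIndepSet G T → S ⊆ T → T = S

/-- The domination number γ(G). -/
noncomputable def domNum {V : Type*} [Fintype V] (G : SimpleGraph V) : ℕ :=
  sInf {n | ∃ D : Finset V, IsDominating G ↑D ∧ D.card = n}

/-- The independent domination number i(G): minimum size of a maximal independent set. -/
noncomputable def indomNum {V : Type*} [Fintype V] (G : SimpleGraph V) : ℕ :=
  sInf {n | ∃ S : Finset V, IsMaxIndep G ↑S ∧ S.card = n}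

/-- `G` is domination perfect: γ(H) = i(H) for every induced subgraph `H`. -/
def DomPerfect {V : Type*} [Fintype V] (G : SimpleGraph V) : Prop :=
  ∀ s : Finset V, domNum (G.induce (↑s : Set V)) = indomNum (G.induce (↑s : Set V))

/-- `G` is minimal domination imperfect. -/
def MinImperfect {V : Type*} [Fintype V] (G : SimpleGraph V) : Prop :=
  ¬ DomPerfect G ∧ ∀ s : Finset V, s ≠ Finset.univ → DomPerfect (G.induce (↑s : Set V))

/-- The double star S_{2,2}: centers 0,1; leaves 2,3 at 0 and 4,5 at 1. -/
def doubleStar : SimpleGraph (Fin 6) :=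
  SimpleGraph.fromRel (fun a b =>
    (a = 0 ∧ b = 1) ∨ (a = 0 ∧ b = 2) ∨ (a = 0 ∧ b = 3) ∨ (a = 1 ∧ b = 4) ∨ (a = 1 ∧ b = 5))

lemma exists_max_indep_superset {V : Type*} [Fintype V] (G : SimpleGraph V) (S : Finset V)
    (hS : _root_.IsIndepSet G ↑S) :
    ∃ T : Finset V, S ⊆ T ∧ IsMaxIndep G ↑T := by
  classical
  set F := Finset.univ.filter (fun T : Finset V => _root_.IsIndepSet G ↑T ∧ S ⊆ T) with hF
  have hSF : S ∈ F := by simp [hF, hS]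
  obtain ⟨T, hTF, hmax⟩ := F.exists_max_image Finset.card ⟨S, hSF⟩
  simp only [hF, Finset.mem_filter] at hTF
  refine ⟨T, hTF.2.2, hTF.2.1, ?_⟩
  intro T' hT' hsub
  have hT'fin : T ⊆ T'.toFinset := by
    intro x hx; rw [Set.mem_toFinset]; exact hsub hx
  have hmem : T'.toFinset ∈ F := by
    simp only [hF, Finset.mem_filter]
    refine ⟨Finset.mem_univ _, ?_, hTF.2.2.trans hT'fin⟩
    rw [Set.coe_toFinset]; exact hT'
  have hcard := hmax _ hmem
  have heq := Finset.eq_of_subset_of_card_le hT'fin hcard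
  rw [heq, Set.coe_toFinset]

lemma exists_max_indep_in {V : Type*} [Fintype V] (G : SimpleGraph V) (D : Finset V) :
    ∃ I₀ : Finset V, I₀ ⊆ D ∧ _root_.IsIndepSet G ↑I₀ ∧
      ∀ d ∈ D, d ∉ I₀ → ∃ z ∈ I₀, G.Adj z d := by
  classical
  set F := Finset.univ.filter (fun T : Finset V => _root_.IsIndepSet G ↑T ∧ T ⊆ D) with hF
  have hSF : (∅ : Finset V) ∈ F := by
    simp [hF, _root_.IsIndepSet]
  obtain ⟨T, hTF, hmax⟩ := F.exists_max_image Finset.card ⟨∅, hSF⟩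
  simp only [hF, Finset.mem_filter] at hTF
  refine ⟨T, hTF.2.2, hTF.2.1, ?_⟩
  intro d hd hdT
  by_contra h
  push_neg at h
  have hins : insert d T ∈ F := by
    simp only [hF, Finset.mem_filter]
    refine ⟨Finset.mem_univ _, ?_, Finset.insert_subset hd hTF.2.2⟩
    intro u hu v hv
    simp only [Finset.coe_insert, Set.mem_insert_iff, Finset.mem_coe] at hu hv
    rcases hu with rfl | hu <;> rcases hv with rfl | hv
    · exact G.irrefl
    · intro hadj; exact h v hv (G.adj_symm hadj)
    · intro hadj; exact h u hu hadj
    · exact hTF.2.1 u hu v hv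
  have := hmax _ hins
  rw [Finset.card_insert_of_notMem hdT] at this
  omega

lemma no_claw {V : Type*} (G : SimpleGraph V)
    (hfree : IsEmpty (completeBipartiteGraph (Fin 1) (Fin 3) ↪g G))
    {d x y z : V} (hxy : x ≠ y) (hxz : x ≠ z) (hyz : y ≠ z)
    (hdx : G.Adj d x) (hdy : G.Adj d y) (hdz : G.Adj d z)
    (nxy : ¬G.Adj x y) (nxz : ¬G.Adj x z) (nyz : ¬G.Adj y z) : False := by
  refine hfree.false ⟨⟨Sum.elim (fun _ => d) ![x, y, z], ?_⟩, ?_⟩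
  · intro a b h
    rcases a with a | a <;> rcases b with b | b <;>
      simp only [Sum.elim_inl, Sum.elim_inr] at h
    · exact congrArg Sum.inl (Subsingleton.elim a b)
    · exfalso; fin_cases b <;>
        simp only [Matrix.cons_val_zero, Matrix.cons_val_one, Matrix.head_cons,
          Matrix.cons_val_two, Matrix.tail_cons] at h
      · exact G.ne_of_adj hdx h
      · exact G.ne_of_adj hdy h
      · exact G.ne_of_adj hdz h
    · exfalso; fin_cases a <;>
        simp only [Matrix.cons_val_zero, Matrix.cons_val_one, Matrix.head_cons,
          Matrix.cons_val_two, Matrix.tail_cons] at h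
      · exact G.ne_of_adj hdx h.symm
      · exact G.ne_of_adj hdy h.symm
      · exact G.ne_of_adj hdz h.symm
    · congr 1
      fin_cases a <;> fin_cases b <;> simp_all
  · rintro (a | a) (b | b) <;>
      simp only [Sum.elim_inl, Sum.elim_inr, completeBipartiteGraph_adj, Sum.isLeft_inl,
        Sum.isRight_inr, Sum.isRight_inl, Sum.isLeft_inr]
    · constructor
      · intro h; exact absurd h G.irrefl
      · intro h; simp at h
    · fin_cases b <;> simp [DFunLike.coe, hdx, hdy, hdz]
    · fin_cases a <;> simp [DFunLike.coe, G.adj_comm, hdx, hdy, hdz]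
    · fin_cases a <;> fin_cases b <;> simp_all [DFunLike.coe, G.adj_comm]

theorem stmt1 {V : Type*} [Fintype V] (G : SimpleGraph V)
    (hfree : IsEmpty (completeBipartiteGraph (Fin 1) (Fin 3) ↪g G)) :
    domNum G = indomNum G := by
  classical
  have hdomNE : {n | ∃ D : Finset V, IsDominating G ↑D ∧ D.card = n}.Nonempty := by
    refine ⟨(Finset.univ : Finset V).card, Finset.univ, ?_, rfl⟩
    intro v hv; exact absurd (by simp) hv
  have hindNE : {n | ∃ S : Finset V, IsMaxIndep G ↑S ∧ S.card = n}.Nonempty := by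
    obtain ⟨T, _, hT⟩ := exists_max_indep_superset G ∅ (by intro u hu; simp at hu)
    exact ⟨T.card, T, hT, rfl⟩
  have hMIdom : ∀ S : Finset V, IsMaxIndep G ↑S → IsDominating G ↑S := by
    rintro S ⟨hind, hmaxS⟩ v hv
    by_contra h
    push_neg at h
    have hins : _root_.IsIndepSet G (insert v ↑S) := by
      intro a ha b hb
      rcases ha with rfl | ha <;> rcases hb with rfl | hb
      · exact G.irrefl
      · intro hadj; exact h b hb hadj.symm
      · intro hadj; exact h a ha hadj
      · exact hind a ha b hb
    have heq := hmaxS _ hins (Set.subset_insert _ _)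
    have : v ∈ (↑S : Set V) := heq ▸ Set.mem_insert v ↑S
    exact hv this
  obtain ⟨S, hSmax, hScard⟩ :
      ∃ S : Finset V, IsMaxIndep G ↑S ∧ S.card = indomNum G := Nat.sInf_mem hindNE
  have hle1 : domNum G ≤ indomNum G := by
    rw [← hScard]; exact Nat.sInf_le ⟨S, hMIdom S hSmax, rfl⟩
  obtain ⟨D, hD, hDcard⟩ :
      ∃ D : Finset V, IsDominating G ↑D ∧ D.card = domNum G := Nat.sInf_mem hdomNE
  obtain ⟨I₀, hI₀D, hI₀ind, hI₀max⟩ := exists_max_indep_in G D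
  obtain ⟨I, hI₀I, hImax⟩ := exists_max_indep_superset G I₀ hI₀ind
  have hIind := hImax.1
  have hch : ∀ x : V, x ∈ I \ D → ∃ dd, dd ∈ D \ I ∧ G.Adj dd x := by
    intro x hx
    have hx' := Finset.mem_sdiff.1 hx
    obtain ⟨u, hu, hadj⟩ := hD x (by simpa using hx'.2)
    refine ⟨u, Finset.mem_sdiff.2 ⟨by simpa using hu, ?_⟩, hadj⟩
    intro huI
    exact hIind u (by simpa using huI) x (by simpa using hx'.1) hadj
  choose g hg1 hg2 using hch
  have hcardle : (I \ D).card ≤ (D \ I).card := by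
    apply Finset.card_le_card_of_injOn (fun x => if hx : x ∈ I \ D then g x hx else x)
    · intro x hx; rw [Finset.mem_coe] at hx; simp only [dif_pos hx]; exact hg1 x hx
    · intro x hx y hy hxy
      simp only [Finset.mem_coe] at hx hy
      simp only [dif_pos hx, dif_pos hy] at hxy
      by_contra hne
      have hdd : g x hx ∈ D \ I := hg1 x hx
      have hdd' := Finset.mem_sdiff.1 hdd
      obtain ⟨z, hzI₀, hzadj⟩ := hI₀max _ hdd'.1 (fun h => hdd'.2 (hI₀I h))
      have hzI : z ∈ I := hI₀I hzI₀
      have hzD : z ∈ D := hI₀D hzI₀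
      have hx' := Finset.mem_sdiff.1 hx
      have hy' := Finset.mem_sdiff.1 hy
      refine no_claw G hfree hne (fun h => hx'.2 (h ▸ hzD)) (fun h => hy'.2 (h ▸ hzD))
        (hg2 x hx) (hxy ▸ hg2 y hy) hzadj.symm
        (hIind x (by simpa using hx'.1) y (by simpa using hy'.1))
        (hIind x (by simpa using hx'.1) z (by simpa using hzI))
        (hIind y (by simpa using hy'.1) z (by simpa using hzI))
  have hIle : I.card ≤ D.card := by
    have h1 := Finset.card_sdiff_add_card_inter I D
    have h2 := Finset.card_sdiff_add_card_inter D I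
    have h3 : (I ∩ D).card = (D ∩ I).card := by rw [Finset.inter_comm]
    omega
  have hle2 : indomNum G ≤ domNum G := by
    calc indomNum G ≤ I.card := Nat.sInf_le ⟨I, hImax, rfl⟩
      _ ≤ D.card := hIle
      _ = domNum G := hDcard
  omega
end

section
/- A finite graph G is domination perfect if and only if every induced subgraph H of G with γ(H) = 2 satisfies i(H) = 2. -/
open SimpleGraph

section Aux

variable {V : Type*} {G : SimpleGraph V}

/-- Domination within an ambient finset `s` (closed form). -/
def DomIn (G : SimpleGraph V) (s D : Finset V) : Prop :=
  D ⊆ s ∧ ∀ v ∈ s, v ∈ D ∨ ∃ u ∈ D, G.Adj u v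

/-- Independence for a finset. -/
def IndIn (G : SimpleGraph V) (D : Finset V) : Prop :=
  ∀ u ∈ D, ∀ v ∈ D, ¬ G.Adj u v

section Generic

variable {W : Type*} [Fintype W] (H : SimpleGraph W)

lemma indep_dom_maxind {S : Finset W} (h1 : _root_.IsIndepSet H ↑S) (h2 : IsDominating H ↑S) :
    IsMaxIndep H ↑S := by
  refine ⟨h1, fun T hT hST => ?_⟩
  refine Set.Subset.antisymm (fun x hx => ?_) hST
  by_contra hxS
  obtain ⟨u, hu, hadj⟩ := h2 x hxS
  exact hT u (hST hu) x hx hadj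

lemma maxind_dominating {S : Finset W} (h : IsMaxIndep H ↑S) : IsDominating H ↑S := by
  intro v hv
  by_contra hno
  push_neg at hno
  have hT : _root_.IsIndepSet H (↑S ∪ {v}) := by
    intro a ha b hb
    rcases ha with ha | ha <;> rcases hb with hb | hb
    · exact h.1 a ha b hb
    · have hb' : b = v := hb
      subst hb'
      exact hno a ha
    · have ha' : a = v := ha
      subst ha'
      intro hadj
      exact hno b hb hadj.symm
    · have ha' : a = v := ha
      have hb' : b = v := hb
      subst ha'; subst hb'
      exact H.loopless.irrefl _
  have := h.2 _ hT (Set.subset_union_left)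
  have hvmem : v ∈ (↑S : Set W) := by
    rw [← this]; exact Or.inr rfl
  exact hv hvmem

lemma maxind_exists : ∃ S : Finset W, IsMaxIndep H ↑S := by
  classical
  obtain ⟨S, hSmem, hSmax⟩ := Finset.exists_max_image
    (Finset.univ.filter fun S : Finset W => _root_.IsIndepSet H ↑S) Finset.card
    ⟨∅, by simp [_root_.IsIndepSet]⟩
  rw [Finset.mem_filter] at hSmem
  refine ⟨S, hSmem.2, fun T hT hST => ?_⟩
  have hTfin : T.Finite := Set.toFinite T
  have hcoe : ↑hTfin.toFinset = T := hTfin.coe_toFinset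
  have hmem : hTfin.toFinset ∈ Finset.univ.filter fun S : Finset W => _root_.IsIndepSet H ↑S := by
    rw [Finset.mem_filter]
    exact ⟨Finset.mem_univ _, by rw [hcoe]; exact hT⟩
  have hsub : S ⊆ hTfin.toFinset := by
    intro x hx
    rw [← Finset.mem_coe, hcoe]
    exact hST hx
  have := Finset.eq_of_subset_of_card_le hsub (hSmax _ hmem)
  rw [← hcoe, ← this]

lemma domNum_le {D : Finset W} (hD : IsDominating H ↑D) : domNum H ≤ D.card :=
  Nat.sInf_le ⟨D, hD, rfl⟩

lemma domNum_exists : ∃ D : Finset W, IsDominating H ↑D ∧ D.card = domNum H := by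
  have hne : {n | ∃ D : Finset W, IsDominating H ↑D ∧ D.card = n}.Nonempty :=
    ⟨(Finset.univ : Finset W).card, Finset.univ, fun v hv => absurd (by simp) hv, rfl⟩
  exact Nat.sInf_mem hne

lemma indomNum_le {S : Finset W} (hS : IsMaxIndep H ↑S) : indomNum H ≤ S.card :=
  Nat.sInf_le ⟨S, hS, rfl⟩

lemma indomNum_exists : ∃ S : Finset W, IsMaxIndep H ↑S ∧ S.card = indomNum H := by
  obtain ⟨S, hS⟩ := maxind_exists H
  have hne : {n | ∃ S : Finset W, IsMaxIndep H ↑S ∧ S.card = n}.Nonempty :=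
    ⟨S.card, S, hS, rfl⟩
  exact Nat.sInf_mem hne

lemma dom_le_indom : domNum H ≤ indomNum H := by
  obtain ⟨S, hS, hcard⟩ := indomNum_exists H
  calc domNum H ≤ S.card := domNum_le H (maxind_dominating H hS)
    _ = indomNum H := hcard

end Generic

section Transfer

variable [Fintype V]

lemma transfer_dom_le {s D : Finset V} (h : DomIn G s D) :
    domNum (G.induce (↑s : Set V)) ≤ D.card := by
  classical
  set D' : Finset ↥(↑s : Set V) := D.subtype (fun x => x ∈ (↑s : Set V)) with hD'
  have hcard : D'.card = D.card := by
    rw [hD', Finset.card_subtype, Finset.filter_true_of_mem]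
    intro x hx
    exact Finset.mem_coe.mpr (h.1 hx)
  have hdom : IsDominating (G.induce (↑s : Set V)) ↑D' := by
    intro v hv
    have hvs : (v : V) ∈ s := Finset.mem_coe.mp v.2
    rcases h.2 v hvs with hvD | ⟨u, huD, hadj⟩
    · exact absurd (Finset.mem_coe.mpr (by rw [hD', Finset.mem_subtype]; exact hvD)) hv
    · refine ⟨⟨u, Finset.mem_coe.mpr (h.1 huD)⟩, ?_, ?_⟩
      · exact Finset.mem_coe.mpr (by rw [hD', Finset.mem_subtype]; exact huD)
      · exact hadj
  calc domNum (G.induce (↑s : Set V)) ≤ D'.card := domNum_le _ hdom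
    _ = D.card := hcard

lemma transfer_dom_ex (s : Finset V) :
    ∃ D : Finset V, DomIn G s D ∧ D.card = domNum (G.induce (↑s : Set V)) := by
  classical
  obtain ⟨D', hD', hcard⟩ := domNum_exists (G.induce (↑s : Set V))
  refine ⟨D'.map (Function.Embedding.subtype _), ⟨?_, ?_⟩, by rw [Finset.card_map]; exact hcard⟩
  · intro x hx
    obtain ⟨y, hy, rfl⟩ := Finset.mem_map.mp hx
    exact Finset.mem_coe.mp y.2
  · intro v hvs
    set v' : ↥(↑s : Set V) := ⟨v, Finset.mem_coe.mpr hvs⟩ with hv'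
    by_cases hmem : v' ∈ D'
    · exact Or.inl (Finset.mem_map.mpr ⟨v', hmem, rfl⟩)
    · obtain ⟨u, hu, hadj⟩ := hD' v' (fun hc => hmem (Finset.mem_coe.mp hc))
      exact Or.inr ⟨↑u, Finset.mem_map.mpr ⟨u, Finset.mem_coe.mp hu, rfl⟩, hadj⟩

lemma transfer_indom_le {s I : Finset V} (hind : IndIn G I) (hdom : DomIn G s I) :
    indomNum (G.induce (↑s : Set V)) ≤ I.card := by
  classical
  set I' : Finset ↥(↑s : Set V) := I.subtype (fun x => x ∈ (↑s : Set V)) with hI'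
  have hmemI' : ∀ x : ↥(↑s : Set V), x ∈ I' ↔ (x : V) ∈ I := by
    intro x; rw [hI', Finset.mem_subtype]
  have hcard : I'.card = I.card := by
    rw [hI', Finset.card_subtype, Finset.filter_true_of_mem]
    intro x hx
    exact Finset.mem_coe.mpr (hdom.1 hx)
  have hindep : _root_.IsIndepSet (G.induce (↑s : Set V)) ↑I' := by
    intro a ha b hb hadj
    exact hind a ((hmemI' a).mp (Finset.mem_coe.mp ha)) b ((hmemI' b).mp (Finset.mem_coe.mp hb)) hadj
  have hdom' : IsDominating (G.induce (↑s : Set V)) ↑I' := by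
    intro v hv
    have hvs : (v : V) ∈ s := Finset.mem_coe.mp v.2
    rcases hdom.2 v hvs with hvD | ⟨u, huD, hadj⟩
    · exact absurd (Finset.mem_coe.mpr ((hmemI' v).mpr hvD)) hv
    · exact ⟨⟨u, Finset.mem_coe.mpr (hdom.1 huD)⟩,
        Finset.mem_coe.mpr ((hmemI' _).mpr huD), hadj⟩
  calc indomNum (G.induce (↑s : Set V)) ≤ I'.card :=
        indomNum_le _ (indep_dom_maxind _ hindep hdom')
    _ = I.card := hcard

lemma transfer_indom_ex (s : Finset V) :
    ∃ I : Finset V, IndIn G I ∧ DomIn G s I ∧ I.card = indomNum (G.induce (↑s : Set V)) := by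
  classical
  obtain ⟨S', hS', hcard⟩ := indomNum_exists (G.induce (↑s : Set V))
  have hdom' := maxind_dominating _ hS'
  refine ⟨S'.map (Function.Embedding.subtype _), ?_, ⟨?_, ?_⟩,
    by rw [Finset.card_map]; exact hcard⟩
  · intro a ha b hb hadj
    obtain ⟨a', ha', rfl⟩ := Finset.mem_map.mp ha
    obtain ⟨b', hb', rfl⟩ := Finset.mem_map.mp hb
    exact hS'.1 a' (Finset.mem_coe.mpr ha') b' (Finset.mem_coe.mpr hb') hadj
  · intro x hx
    obtain ⟨y, hy, rfl⟩ := Finset.mem_map.mp hx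
    exact Finset.mem_coe.mp y.2
  · intro v hvs
    set v' : ↥(↑s : Set V) := ⟨v, Finset.mem_coe.mpr hvs⟩ with hv'
    by_cases hmem : v' ∈ S'
    · exact Or.inl (Finset.mem_map.mpr ⟨v', hmem, rfl⟩)
    · obtain ⟨u, hu, hadj⟩ := hdom' v' (fun hc => hmem (Finset.mem_coe.mp hc))
      exact Or.inr ⟨↑u, Finset.mem_map.mpr ⟨u, Finset.mem_coe.mp hu, rfl⟩, hadj⟩

lemma star_of_hyp
    (hyp : ∀ s : Finset V, domNum (G.induce (↑s : Set V)) = 2 →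
      indomNum (G.induce (↑s : Set V)) = 2)
    (t D : Finset V) (hD : DomIn G t D) (hc : D.card ≤ 2) :
    ∃ I : Finset V, IndIn G I ∧ DomIn G t I ∧ I.card ≤ 2 := by
  classical
  have hle : domNum (G.induce (↑t : Set V)) ≤ 2 := le_trans (transfer_dom_le hD) hc
  by_cases h2 : domNum (G.induce (↑t : Set V)) = 2
  · obtain ⟨I, hI1, hI2, hI3⟩ := transfer_indom_ex (G := G) t
    exact ⟨I, hI1, hI2, by rw [hI3, hyp t h2]⟩
  · obtain ⟨D0, hD0, hc0⟩ := transfer_dom_ex (G := G) t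
    refine ⟨D0, ?_, hD0, by omega⟩
    intro a ha b hb
    have hab : a = b := Finset.card_le_one.mp (by omega) a ha b hb
    subst hab
    exact G.loopless.irrefl a

end Transfer

section Core

variable [Fintype V] [DecidableEq V]

lemma core_lemma (s : Finset V)
    (star : ∀ t D : Finset V, DomIn G t D → D.card ≤ 2 →
      ∃ I : Finset V, IndIn G I ∧ DomIn G t I ∧ I.card ≤ 2) :
    ∀ k (R J : Finset V), R.card ≤ k → R ⊆ s → J ⊆ s →
      (∀ v ∈ s, v ∈ R ∪ J ∨ ∃ u ∈ R ∪ J, G.Adj u v) →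
      IndIn G J →
      (∀ a ∈ J, ∀ b ∈ R, ¬ G.Adj a b ∧ a ≠ b) →
      ∃ I : Finset V, IndIn G I ∧ DomIn G s I ∧ I.card ≤ R.card + J.card := by
  classical
  intro k
  induction k with
  | zero =>
    intro R J hRk _ hJs hdom hJ _
    have hR : R = ∅ := Finset.card_eq_zero.mp (Nat.le_zero.mp hRk)
    subst hR
    refine ⟨J, hJ, ⟨hJs, ?_⟩, by simp⟩
    intro v hv
    simpa using hdom v hv
  | succ k ih =>
    intro R J hRk hRs hJs hdom hJ hJR
    rcases Finset.eq_empty_or_nonempty R with hR0 | ⟨v, hv⟩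
    · subst hR0
      refine ⟨J, hJ, ⟨hJs, ?_⟩, by simp⟩
      intro w hw
      simpa using hdom w hw
    by_cases hcaseA : ∀ u ∈ R, ¬ G.Adj v u
    · -- Case A : move v from R to J
      have hsets : R.erase v ∪ insert v J = R ∪ J := by
        ext x
        by_cases hx : x = v <;>
          simp [hx, hv, Finset.mem_union, Finset.mem_erase, Finset.mem_insert] <;> tauto
      obtain ⟨I, hI1, hI2, hI3⟩ := ih (R.erase v) (insert v J)
        (by have := Finset.card_erase_of_mem hv; have := Finset.card_pos.mpr ⟨v, hv⟩; omega)
        (fun x hx => hRs (Finset.mem_of_mem_erase hx))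
        (by intro x hx
            rcases Finset.mem_insert.mp hx with rfl | hx
            · exact hRs hv
            · exact hJs hx)
        (by intro w hw; rw [hsets]; exact hdom w hw)
        (by intro a ha b hb hadj
            rcases Finset.mem_insert.mp ha with ha' | ha' <;>
              rcases Finset.mem_insert.mp hb with hb' | hb'
            · rw [ha', hb'] at hadj; exact G.loopless.irrefl _ hadj
            · rw [ha'] at hadj; exact (hJR b hb' v hv).1 hadj.symm
            · rw [hb'] at hadj; exact (hJR a ha' v hv).1 hadj
            · exact hJ a ha' b hb' hadj)
        (by intro a ha b hb
            have hbR : b ∈ R := Finset.mem_of_mem_erase hb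
            have hbv : b ≠ v := (Finset.mem_erase.mp hb).1
            rcases Finset.mem_insert.mp ha with ha' | ha'
            · subst ha'
              exact ⟨hcaseA b hbR, fun h => hbv h.symm⟩
            · exact hJR a ha' b hbR)
      refine ⟨I, hI1, hI2, ?_⟩
      have h1 := Finset.card_erase_of_mem hv
      have h2 := Finset.card_insert_le v J
      have h3 := Finset.card_pos.mpr ⟨v, hv⟩
      omega
    · -- Case B
      push_neg at hcaseA
      obtain ⟨u, hu, hadj⟩ := hcaseA
      have hvu : v ≠ u := G.ne_of_adj hadj
      set Rest : Finset V := (R.erase v).erase u ∪ J with hRestDef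
      set P2 : Finset V :=
        s.filter (fun w => ¬ (w ∈ Rest ∨ ∃ x ∈ Rest, G.Adj x w)) with hP2Def
      set t : Finset V := insert v (insert u P2) with htDef
      have hP2s : P2 ⊆ s := by
        intro x hx
        rw [hP2Def, Finset.mem_filter] at hx
        exact hx.1
      have hts : t ⊆ s := by
        intro x hx
        rw [htDef] at hx
        rcases Finset.mem_insert.mp hx with rfl | hx
        · exact hRs hv
        rcases Finset.mem_insert.mp hx with rfl | hx
        · exact hRs hu
        · exact hP2s hx
      have hRunion : ∀ x, x ∈ R ∪ J ↔ x = v ∨ x = u ∨ x ∈ Rest := by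
        intro x
        simp only [hRestDef, Finset.mem_union, Finset.mem_erase]
        constructor
        · rintro (hx | hx)
          · by_cases h1 : x = v
            · exact Or.inl h1
            by_cases h2 : x = u
            · exact Or.inr (Or.inl h2)
            · exact Or.inr (Or.inr (Or.inl ⟨h2, h1, hx⟩))
          · exact Or.inr (Or.inr (Or.inr hx))
        · rintro (rfl | rfl | ⟨_, _, hx⟩ | hx)
          · exact Or.inl hv
          · exact Or.inl hu
          · exact Or.inl hx
          · exact Or.inr hx
      have hDomt : DomIn G t {v, u} := by
        constructor
        · intro x hx
          rcases Finset.mem_insert.mp hx with hx' | hx'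
          · rw [htDef, hx']; exact Finset.mem_insert_self _ _
          · rw [Finset.mem_singleton] at hx'
            rw [htDef, hx']
            exact Finset.mem_insert_of_mem (Finset.mem_insert_self _ _)
        · intro w hw
          rw [htDef] at hw
          rcases Finset.mem_insert.mp hw with rfl | hw
          · exact Or.inl (Finset.mem_insert_self _ _)
          rcases Finset.mem_insert.mp hw with rfl | hw
          · exact Or.inl (Finset.mem_insert_of_mem (Finset.mem_singleton_self _))
          · rw [hP2Def, Finset.mem_filter] at hw
            rcases hdom w hw.1 with hmem | ⟨x, hx, hxadj⟩
            · rcases (hRunion w).mp hmem with h' | h' | h'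
              · exact Or.inl (by rw [h']; exact Finset.mem_insert_self _ _)
              · exact Or.inl (by rw [h']; exact Finset.mem_insert_of_mem (Finset.mem_singleton_self _))
              · exact absurd (Or.inl h') hw.2
            · rcases (hRunion x).mp hx with h' | h' | h'
              · exact Or.inr ⟨x, by rw [h']; exact Finset.mem_insert_self _ _, hxadj⟩
              · exact Or.inr ⟨x, by rw [h']; exact
                  Finset.mem_insert_of_mem (Finset.mem_singleton_self _), hxadj⟩
              · exact absurd (Or.inr ⟨x, h', hxadj⟩) hw.2
      have hcard2 : ({v, u} : Finset V).card ≤ 2 :=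
        le_trans (Finset.card_insert_le _ _) (by simp)
      obtain ⟨I1, hI1ind, hI1dom, hI1card⟩ := star t {v, u} hDomt hcard2
      have hI1t : I1 ⊆ t := hI1dom.1
      have hP2fact : ∀ c ∈ I1 \ ({v, u} : Finset V),
          c ∈ s ∧ c ∉ Rest ∧ ∀ x ∈ Rest, ¬ G.Adj x c := by
        intro c hc
        obtain ⟨hcI, hcvu⟩ := Finset.mem_sdiff.mp hc
        have hct := hI1t hcI
        rw [htDef] at hct
        have hcP2 : c ∈ P2 := by
          rcases Finset.mem_insert.mp hct with h' | h'
          · exact absurd (by rw [h']; exact Finset.mem_insert_self _ _) hcvu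
          rcases Finset.mem_insert.mp h' with h'' | h''
          · exact absurd (by rw [h'']; exact
              Finset.mem_insert_of_mem (Finset.mem_singleton_self _)) hcvu
          · exact h''
        rw [hP2Def, Finset.mem_filter] at hcP2
        exact ⟨hcP2.1, fun h => hcP2.2 (Or.inl h),
          fun x hx hxadj => hcP2.2 (Or.inr ⟨x, hx, hxadj⟩)⟩
      set R' : Finset V := (R.erase v).erase u ∪ I1 ∩ {v, u} with hR'Def
      set J' : Finset V := J ∪ I1 \ {v, u} with hJ'Def
      have huRv : u ∈ R.erase v := Finset.mem_erase.mpr ⟨fun h => hvu h.symm, hu⟩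
      have hcard_ee : ((R.erase v).erase u).card = R.card - 2 := by
        rw [Finset.card_erase_of_mem huRv, Finset.card_erase_of_mem hv]
        omega
      have hR2 : 2 ≤ R.card := Finset.one_lt_card.mpr ⟨v, hv, u, hu, hvu⟩
      have hnotboth : ¬ (v ∈ I1 ∧ u ∈ I1) := fun ⟨h1, h2⟩ => hI1ind v h1 u h2 hadj
      have hIinter : (I1 ∩ {v, u}).card ≤ 1 := by
        by_contra hgt
        push_neg at hgt
        have hsub : I1 ∩ {v, u} ⊆ {v, u} := Finset.inter_subset_right
        have heq : I1 ∩ {v, u} = {v, u} := Finset.eq_of_subset_of_card_le hsub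
          (by have := Finset.card_le_card hsub; omega)
        have hvI : v ∈ I1 ∩ {v, u} := by rw [heq]; exact Finset.mem_insert_self _ _
        have huI : u ∈ I1 ∩ {v, u} := by
          rw [heq]; exact Finset.mem_insert_of_mem (Finset.mem_singleton_self _)
        exact hnotboth ⟨(Finset.mem_inter.mp hvI).1, (Finset.mem_inter.mp huI).1⟩
      have hI1sub : I1 ⊆ R' ∪ J' := by
        intro c hc
        by_cases hcvu : c ∈ ({v, u} : Finset V)
        · exact Finset.mem_union_left _
            (Finset.mem_union_right _ (Finset.mem_inter.mpr ⟨hc, hcvu⟩))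
        · exact Finset.mem_union_right _
            (Finset.mem_union_right _ (Finset.mem_sdiff.mpr ⟨hc, hcvu⟩))
      have h1 : R'.card ≤ k := by
        have hle := Finset.card_union_le ((R.erase v).erase u) (I1 ∩ {v, u})
        rw [← hR'Def] at hle
        omega
      have h2 : R' ⊆ s := by
        intro x hx
        rcases Finset.mem_union.mp hx with hx' | hx'
        · exact hRs (Finset.mem_of_mem_erase (Finset.mem_of_mem_erase hx'))
        · have hx2 := (Finset.mem_inter.mp hx').2
          rcases Finset.mem_insert.mp hx2 with h' | h'
          · rw [h']; exact hRs hv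
          · rw [Finset.mem_singleton] at h'; rw [h']; exact hRs hu
      have h3 : J' ⊆ s := by
        intro x hx
        rcases Finset.mem_union.mp hx with hx' | hx'
        · exact hJs hx'
        · exact (hP2fact x hx').1
      have h4 : ∀ w ∈ s, w ∈ R' ∪ J' ∨ ∃ x ∈ R' ∪ J', G.Adj x w := by
        intro w hw
        by_cases hrest : w ∈ Rest ∨ ∃ x ∈ Rest, G.Adj x w
        · rcases hrest with hwRest | ⟨x, hxRest, hxadj⟩
          · rcases Finset.mem_union.mp hwRest with h' | h'
            · exact Or.inl (Finset.mem_union_left _ (Finset.mem_union_left _ h'))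
            · exact Or.inl (Finset.mem_union_right _ (Finset.mem_union_left _ h'))
          · rcases Finset.mem_union.mp hxRest with h' | h'
            · exact Or.inr ⟨x, Finset.mem_union_left _ (Finset.mem_union_left _ h'), hxadj⟩
            · exact Or.inr ⟨x, Finset.mem_union_right _ (Finset.mem_union_left _ h'), hxadj⟩
        · have hwP2 : w ∈ P2 := by
            rw [hP2Def, Finset.mem_filter]; exact ⟨hw, hrest⟩
          have hwt : w ∈ t := by
            rw [htDef]
            exact Finset.mem_insert_of_mem (Finset.mem_insert_of_mem hwP2)
          rcases hI1dom.2 w hwt with hwI | ⟨y, hy, hyadj⟩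
          · exact Or.inl (hI1sub hwI)
          · exact Or.inr ⟨y, hI1sub hy, hyadj⟩
      have h5 : IndIn G J' := by
        intro a ha b hb hadj2
        rcases Finset.mem_union.mp ha with ha' | ha' <;>
          rcases Finset.mem_union.mp hb with hb' | hb'
        · exact hJ a ha' b hb' hadj2
        · exact (hP2fact b hb').2.2 a (Finset.mem_union_right _ ha') hadj2
        · exact (hP2fact a ha').2.2 b (Finset.mem_union_right _ hb') hadj2.symm
        · exact hI1ind a (Finset.mem_sdiff.mp ha').1 b (Finset.mem_sdiff.mp hb').1 hadj2
      have h6 : ∀ a ∈ J', ∀ b ∈ R', ¬ G.Adj a b ∧ a ≠ b := by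
        intro a ha b hb
        rcases Finset.mem_union.mp ha with ha' | ha' <;>
          rcases Finset.mem_union.mp hb with hb' | hb'
        · exact hJR a ha' b (Finset.mem_of_mem_erase (Finset.mem_of_mem_erase hb'))
        · have hb2 := (Finset.mem_inter.mp hb').2
          have hbR : b ∈ R := by
            rcases Finset.mem_insert.mp hb2 with h' | h'
            · rw [h']; exact hv
            · rw [Finset.mem_singleton] at h'; rw [h']; exact hu
          exact hJR a ha' b hbR
        · have hf := hP2fact a ha'
          have hbRest : b ∈ Rest := Finset.mem_union_left _ hb'
          exact ⟨fun h => hf.2.2 b hbRest h.symm, fun h => hf.2.1 (h.symm ▸ hbRest)⟩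
        · refine ⟨hI1ind a (Finset.mem_sdiff.mp ha').1 b (Finset.mem_inter.mp hb').1, ?_⟩
          intro h
          exact (Finset.mem_sdiff.mp ha').2 (h.symm ▸ (Finset.mem_inter.mp hb').2)
      obtain ⟨I, hIind, hIdom, hIcard⟩ := ih R' J' h1 h2 h3 h4 h5 h6
      refine ⟨I, hIind, hIdom, ?_⟩
      have hsplit := Finset.card_inter_add_card_sdiff I1 ({v, u} : Finset V)
      have hJ'le : J'.card ≤ J.card + (I1 \ {v, u}).card := by
        have := Finset.card_union_le J (I1 \ ({v, u} : Finset V))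
        rw [← hJ'Def] at this
        exact this
      have hR'le : R'.card ≤ ((R.erase v).erase u).card + (I1 ∩ {v, u}).card := by
        have := Finset.card_union_le ((R.erase v).erase u) (I1 ∩ ({v, u} : Finset V))
        rw [← hR'Def] at this
        exact this
      omega
end Core

end Aux

theorem stmt3 {V : Type*} [Fintype V] (G : SimpleGraph V) :
    DomPerfect G ↔
      ∀ s : Finset V, domNum (G.induce (↑s : Set V)) = 2 →
        indomNum (G.induce (↑s : Set V)) = 2 := by
  classical
  constructor
  · intro h s h2
    rw [← h s]
    exact h2
  · intro hyp s
    refine le_antisymm (dom_le_indom _) ?_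
    obtain ⟨D0, hD0, hc0⟩ := transfer_dom_ex (G := G) s
    have star := star_of_hyp hyp
    obtain ⟨I, hIind, hIdom, hIcard⟩ := core_lemma s star D0.card D0 ∅ le_rfl hD0.1
      (Finset.empty_subset s)
      (by intro w hw; simpa using hD0.2 w hw)
      (by intro a ha; exact absurd ha (by simp))
      (by intro a ha; exact absurd ha (by simp))
    calc indomNum (G.induce (↑s : Set V)) ≤ I.card := transfer_indom_le hIind hIdom
      _ ≤ D0.card + (∅ : Finset V).card := hIcard
      _ = domNum (G.induce (↑s : Set V)) := by simpa using hc0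
end

section
/- Let F be a minimal domination imperfect graph, let D be a minimum dominating set of F minimizing the number of edges in the subgraph induced by D, and let uv be an edge in D. Then every vertex of F outside D that is dominated only by u and/or v together with u and v forms all of V(F); that is, V(F) = A ∪ B ∪ C ∪ {u,v}, where A = {x ∉ D : N(x) ∩ D = {u}}, B = {x ∉ D : N(x) ∩ D = {v}}, C = {x ∉ D : N(x) ∩ D = {u,v}}. -/
open SimpleGraph

/-- The number of edges of `F` with both endpoints in `D`. -/
noncomputable def edgesIn {V : Type*} (F : SimpleGraph V) (D : Finset V) : ℕ :=
  {e ∈ F.edgeSet | ∀ x ∈ e, x ∈ (↑D : Set V)}.ncard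

/-- Every finite graph has a maximal independent set. -/
lemma existsMaxIndep {W : Type*} [Fintype W] (G : SimpleGraph W) :
    ∃ S : Finset W, IsMaxIndep G ↑S := by
  classical
  obtain ⟨M, hMm⟩ := Finset.exists_maximal (s :=
    (Finset.univ : Finset (Finset W)).filter fun S : Finset W => _root_.IsIndepSet G ↑S)
    ⟨(∅ : Finset W), by simp [_root_.IsIndepSet]⟩
  have hM : M ∈ (Finset.univ : Finset (Finset W)).filter
      (fun S : Finset W => _root_.IsIndepSet G ↑S) := hMm.prop
  have hmax : ∀ x ∈ (Finset.univ : Finset (Finset W)).filter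
      (fun S : Finset W => _root_.IsIndepSet G ↑S), ¬ M < x :=
    fun x hx hlt => lt_irrefl _ (lt_of_lt_of_le hlt (hMm.2 hx hlt.le))
  rw [Finset.mem_filter] at hM
  refine ⟨M, hM.2, fun T hT hsub => ?_⟩
  have h2 : T.toFinset ∈ (Finset.univ.filter fun S : Finset W => _root_.IsIndepSet G ↑S) := by
    simp only [Finset.mem_filter, Finset.mem_univ, true_and]
    simpa [Set.coe_toFinset] using hT
  have h3 : M ⊆ T.toFinset := fun x hx => Set.mem_toFinset.2 (hsub hx)
  have h4 : M = T.toFinset := by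
    by_contra hne
    exact hmax _ h2 (lt_of_le_of_ne h3 hne)
  rw [h4, Set.coe_toFinset]

theorem stmt9 {V : Type*} [Fintype V] (F : SimpleGraph V)
    (hmin : MinImperfect F)
    (D : Finset V) (hD : IsDominating F ↑D) (hcard : D.card = domNum F)
    (hedges : ∀ D' : Finset V, IsDominating F ↑D' → D'.card = domNum F →
      edgesIn F D ≤ edgesIn F D')
    (u v : V) (hu : u ∈ D) (hv : v ∈ D) (huv : F.Adj u v) :
    ∀ x : V, x = u ∨ x = v ∨
      (x ∉ D ∧
        ((↑D : Set V) ∩ {w | F.Adj w x} = {u} ∨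
         (↑D : Set V) ∩ {w | F.Adj w x} = {v} ∨
         (↑D : Set V) ∩ {w | F.Adj w x} = {u, v})) := by
  classical
  have hne : u ≠ v := huv.ne
  set Q : V → Prop := fun x => x = u ∨ x = v ∨
      (x ∉ D ∧ ∀ w ∈ D, F.Adj w x → w = u ∨ w = v) with hQdef
  have main : ∀ x, Q x := by
    by_contra hcon
    obtain ⟨y, hy⟩ := not_forall.1 hcon
    set s : Finset V := Finset.univ.filter Q with hsdef
    have hmem_s : ∀ x, x ∈ s ↔ Q x := by
      intro x; simp [hsdef]
    have hys : y ∉ s := fun h => hy ((hmem_s y).1 h)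
    have hsne : s ≠ Finset.univ := fun h => hys (h ▸ Finset.mem_univ y)
    have hus : u ∈ s := (hmem_s u).2 (Or.inl rfl)
    have hvs : v ∈ s := (hmem_s v).2 (Or.inr (Or.inl rfl))
    have hperf := hmin.2 s hsne (Finset.univ)
    set W1 := ↥(↑s : Set V) with hW1
    set G2 := (F.induce (↑s : Set V)).induce
      (↑(Finset.univ : Finset W1) : Set W1) with hG2
    -- elements of the doubly-coerced type
    have memuniv : ∀ z : W1, z ∈ (↑(Finset.univ : Finset W1) : Set W1) := by
      intro z; simp
    let lift2 : ∀ x : V, x ∈ s → ↥(↑(Finset.univ : Finset W1) : Set W1) :=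
      fun x hx => ⟨⟨x, hx⟩, memuniv _⟩
    have hG2adj : ∀ (a b : ↥(↑(Finset.univ : Finset W1) : Set W1)),
        G2.Adj a b ↔ F.Adj (a : W1) (b : W1) := by
      intro a b; rfl
    set u2 := lift2 u hus with hu2
    set v2 := lift2 v hvs with hv2
    have hQ_of_mem : ∀ (a : ↥(↑(Finset.univ : Finset W1) : Set W1)), Q ((a : W1) : V) :=
      fun a => (hmem_s _).1 (Finset.mem_coe.1 (a : W1).2)
    -- Step A: {u2, v2} dominates G2
    have hdomuv : IsDominating G2 ↑({u2, v2} : Finset _) := by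
      intro z hz
      rcases hQ_of_mem z with h | h | ⟨hzD, hzdoms⟩
      · exact absurd (by
          simp only [Finset.coe_insert, Finset.coe_singleton, Set.mem_insert_iff,
            Set.mem_singleton_iff]
          exact Or.inl (Subtype.ext (Subtype.ext h))) hz
      · exact absurd (by
          simp only [Finset.coe_insert, Finset.coe_singleton, Set.mem_insert_iff,
            Set.mem_singleton_iff]
          exact Or.inr (Subtype.ext (Subtype.ext h))) hz
      · obtain ⟨w, hwD, hw⟩ := hD ((z : W1) : V) (by simpa using hzD)
        rcases hzdoms w (Finset.mem_coe.1 hwD) hw with rfl | rfl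
        · exact ⟨u2, by simp, (hG2adj u2 z).2 hw⟩
        · exact ⟨v2, by simp, (hG2adj v2 z).2 hw⟩
    have hu2v2 : u2 ≠ v2 := by
      intro h
      exact hne (congrArg Subtype.val (congrArg Subtype.val h))
    have hcard2 : ({u2, v2} : Finset _).card = 2 := Finset.card_pair hu2v2
    have hdn2 : domNum G2 ≤ 2 := Nat.sInf_le ⟨{u2, v2}, hdomuv, hcard2⟩
    -- Step B: get a maximal independent set of size ≤ 2
    have hperf2 : domNum G2 = indomNum G2 := hperf
    have hnonem : {n | ∃ S : Finset ↥(↑(Finset.univ : Finset W1) : Set W1),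
        IsMaxIndep G2 ↑S ∧ S.card = n}.Nonempty := by
      obtain ⟨S, hS⟩ := existsMaxIndep G2
      exact ⟨S.card, S, hS, rfl⟩
    obtain ⟨I, hImax, hIeq⟩ := Nat.sInf_mem hnonem
    have hI2 : I.card ≤ 2 := by
      have h1 : I.card = indomNum G2 := hIeq
      rw [h1, ← hperf2]
      exact hdn2
    -- Step C: project I to V
    set proj : ↥(↑(Finset.univ : Finset W1) : Set W1) → V := fun z => ((z : W1) : V)
      with hprojdef
    set I' : Finset V := I.image proj with hI'def
    have hinj : Function.Injective proj := fun a b h => Subtype.ext (Subtype.ext h)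
    have hI'card : I'.card = I.card := Finset.card_image_of_injective I hinj
    have hmemI' : ∀ x, x ∈ I' ↔ ∃ z ∈ I, ((z : W1) : V) = x := by
      intro x; simp [hI'def, hprojdef]
    have hI'sub_s : ∀ x ∈ I', x ∈ s := by
      intro x hx
      obtain ⟨z, _, rfl⟩ := (hmemI' x).1 hx
      exact Finset.mem_coe.1 (z : W1).2
    have hI'indep : ∀ a ∈ I', ∀ b ∈ I', ¬ F.Adj a b := by
      rintro a ha b hb hab
      obtain ⟨za, hza, rfl⟩ := (hmemI' a).1 ha
      obtain ⟨zb, hzb, rfl⟩ := (hmemI' b).1 hb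
      exact hImax.1 za (Finset.mem_coe.2 hza) zb (Finset.mem_coe.2 hzb) ((hG2adj za zb).2 hab)
    have hI'dom : ∀ x, x ∈ s → x ∉ I' → ∃ a ∈ I', F.Adj a x := by
      intro x hx hxI'
      set z := lift2 x hx with hzdef
      have hzI : z ∉ (↑I : Set _) := by
        intro h
        exact hxI' ((hmemI' x).2 ⟨z, Finset.mem_coe.1 h, rfl⟩)
      have hTnot : ¬ _root_.IsIndepSet G2 (insert z ↑I) := by
        intro hT
        have h := hImax.2 _ hT (Set.subset_insert _ _)
        exact hzI (h ▸ Set.mem_insert z (↑I : Set _))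
      rw [_root_.IsIndepSet] at hTnot
      push_neg at hTnot
      obtain ⟨a, ha, b, hb, hab⟩ := hTnot
      rcases Set.mem_insert_iff.1 ha with ha' | haI
      · rcases Set.mem_insert_iff.1 hb with hb' | hbI
        · rw [ha', hb'] at hab
          exact absurd hab G2.irrefl
        · refine ⟨((b : W1) : V), (hmemI' _).2 ⟨b, Finset.mem_coe.1 hbI, rfl⟩, ?_⟩
          rw [ha'] at hab
          exact ((hG2adj z b).1 hab).symm
      · rcases Set.mem_insert_iff.1 hb with hb' | hbI
        · rw [hb'] at hab
          exact ⟨((a : W1) : V), (hmemI' _).2 ⟨a, Finset.mem_coe.1 haI, rfl⟩,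
            (hG2adj a z).1 hab⟩
        · exact absurd hab (hImax.1 a haI b hbI)
    -- Step D: the new dominating set
    set EE : Finset V := (D.erase u).erase v with hEEdef
    have hmemEE : ∀ w, w ∈ EE ↔ w ∈ D ∧ w ≠ u ∧ w ≠ v := by
      intro w
      rw [hEEdef, Finset.mem_erase, Finset.mem_erase]
      tauto
    set D' : Finset V := EE ∪ I' with hD'def
    have hmemD' : ∀ w, w ∈ D' ↔ w ∈ EE ∨ w ∈ I' := fun w => Finset.mem_union
    have hdomD' : IsDominating F ↑D' := by
      intro x hx
      have hxD' : x ∉ D' := fun h => hx (Finset.mem_coe.2 h)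
      by_cases hxs : x ∈ s
      · have hxI' : x ∉ I' := fun h => hxD' ((hmemD' x).2 (Or.inr h))
        obtain ⟨a, haI', ha⟩ := hI'dom x hxs hxI'
        exact ⟨a, Finset.mem_coe.2 ((hmemD' a).2 (Or.inr haI')), ha⟩
      · have hQx : ¬ Q x := fun h => hxs ((hmem_s x).2 h)
        simp only [hQdef] at hQx
        push_neg at hQx
        obtain ⟨hxu, hxv, h3⟩ := hQx
        by_cases hxD : x ∈ D
        · exact absurd ((hmemD' x).2 (Or.inl ((hmemEE x).2 ⟨hxD, hxu, hxv⟩))) hxD'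
        · obtain ⟨w, hwD, hwadj, hwu, hwv⟩ := h3 hxD
          exact ⟨w, Finset.mem_coe.2 ((hmemD' w).2 (Or.inl ((hmemEE w).2 ⟨hwD, hwu, hwv⟩))),
            hwadj⟩
    have hD2 : 2 ≤ D.card := by
      have hsubuv : ({u, v} : Finset V) ⊆ D := by
        intro w hw
        rcases Finset.mem_insert.1 hw with rfl | hw
        · exact hu
        · exact (Finset.mem_singleton.1 hw) ▸ hv
      calc 2 = ({u, v} : Finset V).card := (Finset.card_pair hne).symm
        _ ≤ D.card := Finset.card_le_card hsubuv
    have hEEcard : EE.card = D.card - 1 - 1 := by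
      rw [hEEdef, Finset.card_erase_of_mem (Finset.mem_erase.2 ⟨hne.symm, hv⟩),
        Finset.card_erase_of_mem hu]
    have hcu : D'.card ≤ EE.card + I'.card := Finset.card_union_le _ _
    have hD'le : D'.card ≤ D.card := by omega
    have hge : domNum F ≤ D'.card := Nat.sInf_le ⟨D', hdomD', rfl⟩
    have hcardD' : D'.card = domNum F := le_antisymm (hcard ▸ hD'le) hge
    -- edges comparison
    have hside : ∀ a b, F.Adj a b → a ∈ I' → b ∈ EE → a ∈ D := by
      intro a b hab haI' hbEE
      obtain ⟨hbD, hbu, hbv⟩ := (hmemEE b).1 hbEE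
      rcases (hmem_s a).1 (hI'sub_s a haI') with rfl | rfl | ⟨haD, hadoms⟩
      · exact hu
      · exact hv
      · rcases hadoms b hbD hab.symm with h | h
        · exact absurd h hbu
        · exact absurd h hbv
    have hend : ∀ a b, F.Adj a b → a ∈ D' → b ∈ D' → a ∈ D ∧ b ∈ D := by
      intro a b hab ha hb
      rcases (hmemD' a).1 ha with haE | haI <;> rcases (hmemD' b).1 hb with hbE | hbI
      · exact ⟨((hmemEE a).1 haE).1, ((hmemEE b).1 hbE).1⟩
      · exact ⟨((hmemEE a).1 haE).1, hside b a hab.symm hbI haE⟩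
      · exact ⟨hside a b hab haI hbE, ((hmemEE b).1 hbE).1⟩
      · exact absurd hab (hI'indep a haI b hbI)
    have hEsub : {e ∈ F.edgeSet | ∀ x ∈ e, x ∈ (↑D' : Set V)} ⊆
        {e ∈ F.edgeSet | ∀ x ∈ e, x ∈ (↑D : Set V)} := by
      intro e he
      induction e using Sym2.ind with
      | _ a b =>
        obtain ⟨hadj, hmem⟩ := he
        rw [F.mem_edgeSet] at hadj
        have ha : a ∈ D' := Finset.mem_coe.1 (hmem a (Sym2.mem_mk_left a b))
        have hb : b ∈ D' := Finset.mem_coe.1 (hmem b (Sym2.mem_mk_right a b))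
        obtain ⟨haD, hbD⟩ := hend a b hadj ha hb
        refine ⟨F.mem_edgeSet.2 hadj, ?_⟩
        intro x hx
        rcases Sym2.mem_iff.1 hx with rfl | rfl
        · exact Finset.mem_coe.2 haD
        · exact Finset.mem_coe.2 hbD
    have hnotboth : u2 ∉ I ∨ v2 ∉ I := by
      by_contra h
      push_neg at h
      exact hImax.1 u2 (Finset.mem_coe.2 h.1) v2 (Finset.mem_coe.2 h.2)
        ((hG2adj u2 v2).2 huv)
    have hor : u ∉ D' ∨ v ∉ D' := by
      rcases hnotboth with h | h
      · left
        intro hmem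
        rcases (hmemD' u).1 hmem with hE | hI'
        · exact ((hmemEE u).1 hE).2.1 rfl
        · obtain ⟨z, hz, hzv⟩ := (hmemI' u).1 hI'
          exact h (by rwa [show z = u2 from Subtype.ext (Subtype.ext hzv)] at hz)
      · right
        intro hmem
        rcases (hmemD' v).1 hmem with hE | hI'
        · exact ((hmemEE v).1 hE).2.2 rfl
        · obtain ⟨z, hz, hzv⟩ := (hmemI' v).1 hI'
          exact h (by rwa [show z = v2 from Subtype.ext (Subtype.ext hzv)] at hz)
    have hsuv_mem : s(u, v) ∈ {e ∈ F.edgeSet | ∀ x ∈ e, x ∈ (↑D : Set V)} := by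
      refine ⟨F.mem_edgeSet.2 huv, ?_⟩
      intro x hx
      rcases Sym2.mem_iff.1 hx with rfl | rfl
      · exact Finset.mem_coe.2 hu
      · exact Finset.mem_coe.2 hv
    have hsuv_not : s(u, v) ∉ {e ∈ F.edgeSet | ∀ x ∈ e, x ∈ (↑D' : Set V)} := by
      rintro ⟨-, hmem⟩
      rcases hor with h | h
      · exact h (Finset.mem_coe.1 (hmem u (Sym2.mem_mk_left u v)))
      · exact h (Finset.mem_coe.1 (hmem v (Sym2.mem_mk_right u v)))
    have hfin : {e ∈ F.edgeSet | ∀ x ∈ e, x ∈ (↑D : Set V)}.Finite := Set.toFinite _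
    have hlt : edgesIn F D' < edgesIn F D :=
      Set.ncard_lt_ncard ((Set.ssubset_iff_of_subset hEsub).2
        ⟨s(u, v), hsuv_mem, hsuv_not⟩) hfin
    exact absurd (hedges D' hdomD' hcardD') (not_le.2 hlt)
  intro x
  rcases main x with h | h | ⟨hxD, hdoms⟩
  · exact Or.inl h
  · exact Or.inr (Or.inl h)
  · refine Or.inr (Or.inr ⟨hxD, ?_⟩)
    obtain ⟨w, hwD, hw⟩ := hD x (by simpa using hxD)
    have hwuv : w = u ∨ w = v := hdoms w (by simpa using hwD) hw
    by_cases hu' : F.Adj u x <;> by_cases hv' : F.Adj v x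
    · refine Or.inr (Or.inr ?_)
      ext z
      simp only [Set.mem_inter_iff, Set.mem_setOf_eq, Set.mem_insert_iff,
        Set.mem_singleton_iff, Finset.mem_coe]
      constructor
      · rintro ⟨hzD, hz⟩; exact hdoms z hzD hz
      · rintro (rfl | rfl)
        exacts [⟨hu, hu'⟩, ⟨hv, hv'⟩]
    · refine Or.inl ?_
      ext z
      simp only [Set.mem_inter_iff, Set.mem_setOf_eq, Set.mem_singleton_iff, Finset.mem_coe]
      constructor
      · rintro ⟨hzD, hz⟩
        rcases hdoms z hzD hz with rfl | rfl
        · rfl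
        · exact absurd hz hv'
      · rintro rfl; exact ⟨hu, hu'⟩
    · refine Or.inr (Or.inl ?_)
      ext z
      simp only [Set.mem_inter_iff, Set.mem_setOf_eq, Set.mem_singleton_iff, Finset.mem_coe]
      constructor
      · rintro ⟨hzD, hz⟩
        rcases hdoms z hzD hz with rfl | rfl
        · exact absurd hz hu'
        · rfl
      · rintro rfl; exact ⟨hv, hv'⟩
    · rcases hwuv with rfl | rfl
      · exact absurd hw hu'
      · exact absurd hw hv'
end

section
/- Let F be a minimal domination imperfect graph. Then i(F) > 2 and γ(F) = 2. -/
open SimpleGraph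

open scoped Classical

section Aux
variable {V : Type*} {W : Type*}

lemma indep_insert_aux (G : SimpleGraph V) {S : Set V} (hS : _root_.IsIndepSet G S) {w : V}
    (h : ¬ _root_.IsIndepSet G (insert w S)) : ∃ u ∈ S, G.Adj u w := by
  by_contra hc
  push_neg at hc
  apply h
  intro x hx y hy hadj
  rw [Set.mem_insert_iff] at hx hy
  rcases hx with rfl | hx
  · rcases hy with rfl | hy
    · exact G.irrefl hadj
    · exact hc y hy (G.adj_symm hadj)
  · rcases hy with rfl | hy
    · exact hc x hx hadj
    · exact hS x hx y hy hadj

lemma maxIndep_dominating (G : SimpleGraph V) {S : Set V} (h : IsMaxIndep G S) :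
    IsDominating G S := by
  intro v hv
  have hni : ¬ _root_.IsIndepSet G (insert v S) := by
    intro hind
    exact hv (h.2 _ hind (Set.subset_insert _ _) ▸ Set.mem_insert v S)
  exact indep_insert_aux G h.1 hni

lemma exists_maxIndep [Fintype V] (G : SimpleGraph V) :
    ∃ S : Finset V, IsMaxIndep G ↑S := by
  obtain ⟨S, hSmem, hSmax⟩ := Finset.exists_max_image
    (Finset.univ.powerset.filter (fun t : Finset V => _root_.IsIndepSet G (↑t : Set V))) Finset.card
    ⟨∅, by simp [_root_.IsIndepSet]⟩
  refine ⟨S, (Finset.mem_filter.1 hSmem).2, ?_⟩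
  intro T hT hsub
  have hfin : T.Finite := Set.toFinite T
  have hcoe : ↑hfin.toFinset = T := hfin.coe_toFinset
  have hmem : hfin.toFinset ∈ Finset.univ.powerset.filter (fun t : Finset V => _root_.IsIndepSet G (↑t : Set V)) := by
    simp only [Finset.mem_filter, Finset.mem_powerset]
    exact ⟨Finset.subset_univ _, by rw [hcoe]; exact hT⟩
  have hsub' : S ⊆ hfin.toFinset := by
    intro x hx
    have : x ∈ T := hsub hx
    rwa [← hcoe] at this
  have := Finset.eq_of_subset_of_card_le hsub' (hSmax _ hmem)
  rw [← hcoe, ← this]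

lemma domNum_le_card [Fintype V] (G : SimpleGraph V) {D : Finset V} (h : IsDominating G ↑D) :
    domNum G ≤ D.card := Nat.sInf_le ⟨D, h, rfl⟩

lemma indomNum_le_card [Fintype V] (G : SimpleGraph V) {S : Finset V} (h : IsMaxIndep G ↑S) :
    indomNum G ≤ S.card := Nat.sInf_le ⟨S, h, rfl⟩

lemma exists_min_dominating [Fintype V] (G : SimpleGraph V) :
    ∃ D : Finset V, IsDominating G ↑D ∧ D.card = domNum G := by
  have hne : {n | ∃ D : Finset V, IsDominating G ↑D ∧ D.card = n}.Nonempty :=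
    ⟨Finset.univ.card, Finset.univ, fun v hv => absurd (Finset.mem_coe.2 (Finset.mem_univ v)) hv, rfl⟩
  obtain ⟨D, hD, hc⟩ := Nat.sInf_mem hne
  exact ⟨D, hD, hc⟩

lemma exists_min_maxindep [Fintype V] (G : SimpleGraph V) :
    ∃ S : Finset V, IsMaxIndep G ↑S ∧ S.card = indomNum G := by
  obtain ⟨S₀, hS₀⟩ := exists_maxIndep G
  obtain ⟨S, hS, hc⟩ := Nat.sInf_mem (s := {n | ∃ S : Finset V, IsMaxIndep G ↑S ∧ S.card = n})
    ⟨S₀.card, S₀, hS₀, rfl⟩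
  exact ⟨S, hS, hc⟩

lemma domNum_le_indomNum [Fintype V] (G : SimpleGraph V) : domNum G ≤ indomNum G := by
  obtain ⟨S, hS, hc⟩ := exists_min_maxindep G
  calc domNum G ≤ S.card := domNum_le_card G (maxIndep_dominating G hS)
    _ = indomNum G := hc

end Aux
section Transfer
variable {V : Type*} {W : Type*}

lemma dominating_image {G : SimpleGraph V} {G' : SimpleGraph W}
    (e : W ≃ V) (he : ∀ a b, G'.Adj a b ↔ G.Adj (e a) (e b))
    {D : Finset W} (h : IsDominating G' ↑D) : IsDominating G ↑(D.image e) := by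
  intro v hv
  have hv' : e.symm v ∉ (↑D : Set W) := by
    intro hmem
    exact hv (by
      simp only [Finset.coe_image]
      exact ⟨e.symm v, hmem, e.apply_symm_apply v⟩)
  obtain ⟨u, hu, hadj⟩ := h _ hv'
  refine ⟨e u, ?_, ?_⟩
  · simp only [Finset.coe_image]
    exact ⟨u, hu, rfl⟩
  · have := (he u (e.symm v)).1 hadj
    rwa [e.apply_symm_apply] at this

lemma maxindep_image {G : SimpleGraph V} {G' : SimpleGraph W}
    (e : W ≃ V) (he : ∀ a b, G'.Adj a b ↔ G.Adj (e a) (e b))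
    {D : Finset W} (h : IsMaxIndep G' ↑D) : IsMaxIndep G ↑(D.image e) := by
  constructor
  · intro x hx y hy hadj
    simp only [Finset.coe_image, Set.mem_image, Finset.mem_coe] at hx hy
    obtain ⟨x', hx', rfl⟩ := hx
    obtain ⟨y', hy', rfl⟩ := hy
    exact h.1 x' hx' y' hy' ((he x' y').2 hadj)
  · intro T hT hsub
    set T' : Set W := {w | e w ∈ T} with hT'def
    have hT'ind : _root_.IsIndepSet G' T' := by
      intro x hx y hy hadj
      exact hT (e x) hx (e y) hy ((he x y).1 hadj)
    have hsub' : (↑D : Set W) ⊆ T' := by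
      intro x hx
      exact hsub (by simp only [Finset.coe_image]; exact ⟨x, hx, rfl⟩)
    have hTeq : T' = ↑D := h.2 T' hT'ind hsub'
    ext v
    constructor
    · intro hv
      have : e.symm v ∈ T' := by simp [hT'def, e.apply_symm_apply, hv]
      rw [hTeq] at this
      simp only [Finset.coe_image, Set.mem_image, Finset.mem_coe]
      exact ⟨e.symm v, this, e.apply_symm_apply v⟩
    · intro hv
      simp only [Finset.coe_image, Set.mem_image, Finset.mem_coe] at hv
      obtain ⟨w, hw, rfl⟩ := hv
      have : w ∈ T' := hTeq ▸ hw
      exact this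

lemma domNum_le_congr [Fintype V] [Fintype W] {G : SimpleGraph V} {G' : SimpleGraph W}
    (e : W ≃ V) (he : ∀ a b, G'.Adj a b ↔ G.Adj (e a) (e b)) :
    domNum G ≤ domNum G' := by
  obtain ⟨D, hD, hc⟩ := exists_min_dominating G'
  calc domNum G ≤ (D.image e).card := domNum_le_card G (dominating_image e he hD)
    _ = D.card := Finset.card_image_of_injective D e.injective
    _ = domNum G' := hc

lemma indomNum_le_congr [Fintype V] [Fintype W] {G : SimpleGraph V} {G' : SimpleGraph W}
    (e : W ≃ V) (he : ∀ a b, G'.Adj a b ↔ G.Adj (e a) (e b)) :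
    indomNum G ≤ indomNum G' := by
  obtain ⟨D, hD, hc⟩ := exists_min_maxindep G'
  calc indomNum G ≤ (D.image e).card := indomNum_le_card G (maxindep_image e he hD)
    _ = D.card := Finset.card_image_of_injective D e.injective
    _ = indomNum G' := hc

lemma symm_he {G : SimpleGraph V} {G' : SimpleGraph W}
    (e : W ≃ V) (he : ∀ a b, G'.Adj a b ↔ G.Adj (e a) (e b)) :
    ∀ a b, G.Adj a b ↔ G'.Adj (e.symm a) (e.symm b) := by
  intro a b
  rw [he (e.symm a) (e.symm b), e.apply_symm_apply, e.apply_symm_apply]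

lemma domNum_congr [Fintype V] [Fintype W] {G : SimpleGraph V} {G' : SimpleGraph W}
    (e : W ≃ V) (he : ∀ a b, G'.Adj a b ↔ G.Adj (e a) (e b)) :
    domNum G' = domNum G :=
  le_antisymm (domNum_le_congr e.symm (symm_he e he)) (domNum_le_congr e he)

lemma indomNum_congr [Fintype V] [Fintype W] {G : SimpleGraph V} {G' : SimpleGraph W}
    (e : W ≃ V) (he : ∀ a b, G'.Adj a b ↔ G.Adj (e a) (e b)) :
    indomNum G' = indomNum G :=
  le_antisymm (indomNum_le_congr e.symm (symm_he e he)) (indomNum_le_congr e he)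

lemma induce_univ_domNum [Fintype V] (G : SimpleGraph V) :
    domNum (G.induce (↑(Finset.univ : Finset V) : Set V)) = domNum G :=
  domNum_congr (Equiv.subtypeUnivEquiv (by simp)) (fun a b => Iff.rfl)

lemma induce_univ_indomNum [Fintype V] (G : SimpleGraph V) :
    indomNum (G.induce (↑(Finset.univ : Finset V) : Set V)) = indomNum G :=
  indomNum_congr (Equiv.subtypeUnivEquiv (by simp)) (fun a b => Iff.rfl)

lemma domPerfect_self [Fintype V] (G : SimpleGraph V) (h : DomPerfect G) :
    domNum G = indomNum G := by
  have := h Finset.univ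
  rwa [induce_univ_domNum, induce_univ_indomNum] at this

end Transfer
section EdgeCnt
variable {V : Type*}

/-- Number of ordered adjacent pairs inside `D`. -/
noncomputable def edgeCnt (G : SimpleGraph V) (D : Finset V) : ℕ :=
  ((D ×ˢ D).filter fun p => G.Adj p.1 p.2).card

lemma edgeCnt_lt {G : SimpleGraph V} {D₁ D₂ : Finset V} (hsub : D₁ ⊆ D₂)
    {x y : V} (hx : x ∈ D₂) (hy : y ∈ D₂) (hadj : G.Adj x y) (hnot : x ∉ D₁) :
    edgeCnt G D₁ < edgeCnt G D₂ := by
  apply Finset.card_lt_card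
  have hsubf : ((D₁ ×ˢ D₁).filter fun p => G.Adj p.1 p.2) ⊆
      ((D₂ ×ˢ D₂).filter fun p => G.Adj p.1 p.2) :=
    Finset.filter_subset_filter _ (Finset.product_subset_product hsub hsub)
  rw [Finset.ssubset_iff_of_subset hsubf]
  refine ⟨(x, y), ?_, ?_⟩
  · simp only [Finset.mem_filter, Finset.mem_product]
    exact ⟨⟨hx, hy⟩, hadj⟩
  · simp only [Finset.mem_filter, Finset.mem_product]
    intro h
    exact hnot h.1.1

lemma edgeCnt_insert {G : SimpleGraph V} {D : Finset V} {x : V} (_hx : x ∉ D)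
    (h : ∀ d ∈ D, ¬ G.Adj d x) : edgeCnt G (insert x D) = edgeCnt G D := by
  unfold edgeCnt
  congr 1
  ext p
  simp only [Finset.mem_filter, Finset.mem_product, Finset.mem_insert]
  constructor
  · rintro ⟨⟨h1, h2⟩, hadj⟩
    refine ⟨⟨?_, ?_⟩, hadj⟩
    · rcases h1 with h1 | h1
      · exfalso
        rcases h2 with h2 | h2
        · rw [h1, h2] at hadj; exact G.irrefl hadj
        · rw [h1] at hadj; exact h p.2 h2 (G.adj_symm hadj)
      · exact h1
    · rcases h2 with h2 | h2
      · exfalso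
        rcases h1 with h1 | h1
        · rw [h1, h2] at hadj; exact G.irrefl hadj
        · rw [h2] at hadj; exact h p.1 h1 hadj
      · exact h2
  · rintro ⟨⟨h1, h2⟩, hadj⟩
    exact ⟨⟨Or.inr h1, Or.inr h2⟩, hadj⟩

lemma edgeCnt_eq_zero_indep {G : SimpleGraph V} {D : Finset V} (h : edgeCnt G D = 0) :
    _root_.IsIndepSet G ↑D := by
  intro u hu v hv hadj
  have : (u, v) ∈ (D ×ˢ D).filter fun p => G.Adj p.1 p.2 := by
    simp only [Finset.mem_filter, Finset.mem_product]
    exact ⟨⟨hu, hv⟩, hadj⟩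
  rw [Finset.card_eq_zero.1 h] at this
  exact absurd this (Finset.notMem_empty _)

lemma edgeCnt_ne_zero_adj {G : SimpleGraph V} {D : Finset V} (h : edgeCnt G D ≠ 0) :
    ∃ u ∈ D, ∃ v ∈ D, G.Adj u v := by
  obtain ⟨p, hp⟩ := Finset.card_pos.1 (Nat.pos_of_ne_zero h)
  simp only [Finset.mem_filter, Finset.mem_product] at hp
  exact ⟨p.1, hp.1.1, p.2, hp.1.2, hp.2⟩

end EdgeCnt
theorem stmt10 {V : Type*} [Fintype V] (F : SimpleGraph V)
    (hmin : MinImperfect F) : 2 < indomNum F ∧ domNum F = 2 := by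
  classical
  -- Step 1: γ(F) ≠ i(F)
  have hgi : domNum F ≠ indomNum F := by
    intro heq
    apply hmin.1
    intro s
    by_cases hs : s = Finset.univ
    · subst hs
      rw [induce_univ_domNum, induce_univ_indomNum]
      exact heq
    · exact domPerfect_self _ (hmin.2 s hs)
  have hlt : domNum F < indomNum F := lt_of_le_of_ne (domNum_le_indomNum F) hgi
  -- Step 2: choose a minimum dominating set with minimum edge count
  set M : Set ℕ :=
    {m | ∃ D : Finset V, IsDominating F ↑D ∧ D.card = domNum F ∧ edgeCnt F D = m} with hM
  have hMne : M.Nonempty := by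
    obtain ⟨D₀, h1, h2⟩ := exists_min_dominating F
    exact ⟨edgeCnt F D₀, D₀, h1, h2, rfl⟩
  obtain ⟨D, hDdom, hDcard, hDecnt⟩ := Nat.sInf_mem hMne
  by_cases hzero : edgeCnt F D = 0
  · -- D independent: contradiction with γ < i
    exfalso
    have hind := edgeCnt_eq_zero_indep hzero
    have hmax : IsMaxIndep F ↑D := by
      refine ⟨hind, ?_⟩
      intro T hT hsub
      apply Set.Subset.antisymm ?_ hsub
      intro t ht
      by_contra htD
      obtain ⟨x, hx, hadj⟩ := hDdom t htD
      exact hT x (hsub hx) t ht hadj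
    have hle := indomNum_le_card F hmax
    omega
  · obtain ⟨u, hu, v, hv, huv⟩ := edgeCnt_ne_zero_adj hzero
    have hne' : u ≠ v := F.ne_of_adj huv
    set S : Finset V := Finset.univ.filter
      (fun w => w = u ∨ w = v ∨
        (((u = w ∨ F.Adj u w) ∨ (v = w ∨ F.Adj v w)) ∧
          ∀ d ∈ D, d ≠ u → d ≠ v → ¬ (d = w ∨ F.Adj d w))) with hSdef
    have huS : u ∈ S := by rw [hSdef]; exact Finset.mem_filter.2 ⟨Finset.mem_univ u, Or.inl rfl⟩
    have hvS : v ∈ S := by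
      rw [hSdef]; exact Finset.mem_filter.2 ⟨Finset.mem_univ v, Or.inr (Or.inl rfl)⟩
    have hS3 : ∀ w ∈ S, w ≠ u → w ≠ v →
        (F.Adj u w ∨ F.Adj v w) ∧ w ∉ D ∧ ∀ d ∈ D, d ≠ u → d ≠ v → ¬ F.Adj d w := by
      intro w hw hwu hwv
      rw [hSdef, Finset.mem_filter] at hw
      rcases hw.2 with h1 | h1 | h1
      · exact absurd h1 hwu
      · exact absurd h1 hwv
      · obtain ⟨hN, hpriv⟩ := h1
        refine ⟨?_, ?_, ?_⟩
        · rcases hN with (h | h) | (h | h)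
          · exact absurd h.symm hwu
          · exact Or.inl h
          · exact absurd h.symm hwv
          · exact Or.inr h
        · intro hwD
          exact hpriv w hwD hwu hwv (Or.inl rfl)
        · intro d hd hdu hdv hadj
          exact hpriv d hd hdu hdv (Or.inr hadj)
    set B : Finset V := (D.erase u).erase v with hBdef
    have hvB : v ∉ B := by rw [hBdef]; exact Finset.notMem_erase v _
    have hBsub : B ⊆ D := (Finset.erase_subset _ _).trans (Finset.erase_subset _ _)
    have hBmem : ∀ d ∈ B, d ∈ D ∧ d ≠ u ∧ d ≠ v := by
      intro d hd
      rw [hBdef] at hd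
      obtain ⟨hdv, hd'⟩ := Finset.mem_erase.1 hd
      obtain ⟨hdu, hdD⟩ := Finset.mem_erase.1 hd'
      exact ⟨hdD, hdu, hdv⟩
    have hBcard : B.card = D.card - 2 := by
      rw [hBdef, Finset.card_erase_of_mem (Finset.mem_erase.2 ⟨hne'.symm, hv⟩),
        Finset.card_erase_of_mem hu]
      omega
    have hk2 : 2 ≤ D.card := by
      have hsub : ({u, v} : Finset V) ⊆ D := by
        intro x hx
        rcases Finset.mem_insert.1 hx with rfl | hx
        · exact hu
        · rw [Finset.mem_singleton.1 hx]; exact hv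
      have h2 : ({u, v} : Finset V).card = 2 := by
        rw [Finset.card_insert_of_notMem (by simp [hne']), Finset.card_singleton]
      rw [← h2]
      exact Finset.card_le_card hsub
    -- every vertex outside S and outside D has a neighbor in B
    have hdomaux : ∀ w, w ∉ S → w ∉ (↑D : Set V) → ∃ d ∈ B, F.Adj d w := by
      intro w hwS hwD
      obtain ⟨d₀, hd₀, hadj₀⟩ := hDdom w hwD
      have hw' : ¬(w = u ∨ w = v ∨
          (((u = w ∨ F.Adj u w) ∨ (v = w ∨ F.Adj v w)) ∧
            ∀ d ∈ D, d ≠ u → d ≠ v → ¬ (d = w ∨ F.Adj d w))) := by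
        intro hP
        exact hwS (by rw [hSdef]; exact Finset.mem_filter.2 ⟨Finset.mem_univ w, hP⟩)
      push_neg at hw'
      obtain ⟨hwu, hwv, hP3⟩ := hw'
      by_cases hNw : ((u = w ∨ F.Adj u w) ∨ (v = w ∨ F.Adj v w))
      · obtain ⟨d, hd, hdu, hdv, hNdw⟩ := hP3 hNw
        rcases hNdw with heq | hadj
        · exact absurd (heq ▸ (Finset.mem_coe.2 hd) : w ∈ (↑D : Set V)) hwD
        · exact ⟨d, by rw [hBdef]; exact Finset.mem_erase.2 ⟨hdv, Finset.mem_erase.2 ⟨hdu, hd⟩⟩,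
            hadj⟩
      · have hd₀' : d₀ ∈ D := Finset.mem_coe.1 hd₀
        have hd₀u : d₀ ≠ u := fun h => hNw (Or.inl (Or.inr (by rw [← h]; exact hadj₀)))
        have hd₀v : d₀ ≠ v := fun h => hNw (Or.inr (Or.inr (by rw [← h]; exact hadj₀)))
        refine ⟨d₀, ?_, hadj₀⟩
        rw [hBdef]
        exact Finset.mem_erase.2 ⟨hd₀v, Finset.mem_erase.2 ⟨hd₀u, hd₀'⟩⟩
    -- Key lemma A: no single vertex of S dominates all of S
    have keyA : ∀ c ∈ S, (∀ w ∈ S, w ≠ c → F.Adj c w) → False := by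
      intro c hcS hcdom
      set D' : Finset V := insert c B with hD'def
      have hdom' : IsDominating F ↑D' := by
        intro w hw
        by_cases hwS : w ∈ S
        · have hwc : w ≠ c := by
            intro h
            exact hw (by rw [hD'def, h]; simp)
          exact ⟨c, by rw [hD'def]; simp, hcdom w hwS hwc⟩
        · by_cases hwD : w ∈ D
          · exfalso
            have hwu : w ≠ u := fun h => hwS (by rw [h]; exact huS)
            have hwv : w ≠ v := fun h => hwS (by rw [h]; exact hvS)
            apply hw
            rw [hD'def]
            simp only [Finset.coe_insert, Set.mem_insert_iff, Finset.mem_coe]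
            exact Or.inr (by rw [hBdef]; exact Finset.mem_erase.2 ⟨hwv, Finset.mem_erase.2 ⟨hwu, hwD⟩⟩)
          · obtain ⟨d, hd, hadj⟩ := hdomaux w hwS (fun h => hwD (Finset.mem_coe.1 h))
            refine ⟨d, ?_, hadj⟩
            rw [hD'def]
            simp only [Finset.coe_insert, Set.mem_insert_iff, Finset.mem_coe]
            exact Or.inr hd
      have hcard' : D'.card ≤ D.card - 1 := by
        have h1 : D'.card ≤ B.card + 1 := by rw [hD'def]; exact Finset.card_insert_le _ _
        omega
      have hge := domNum_le_card F hdom'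
      omega
    -- the mixed-case edge-count lemma
    have hmix : ∀ a b : V, a ≠ b → ¬ F.Adj a b →
        (a = u ∨ a = v) → b ∈ S → b ≠ u → b ≠ v →
        edgeCnt F (insert a (insert b B)) < edgeCnt F D := by
      intro a b hab hnadj haspec hbS hbu hbv
      obtain ⟨hbN, hbD, hbpriv⟩ := hS3 b hbS hbu hbv
      rcases haspec with ha | ha
      · have h1 : insert a (insert b B) = insert b (D.erase v) := by
          rw [Finset.insert_comm, ha]
          congr 1
          rw [hBdef, Finset.erase_right_comm]
          exact Finset.insert_erase (Finset.mem_erase.2 ⟨hne', hu⟩)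
        rw [h1]
        have h2 : edgeCnt F (insert b (D.erase v)) = edgeCnt F (D.erase v) := by
          apply edgeCnt_insert
          · intro h; exact hbD (Finset.mem_of_mem_erase h)
          · intro d hd hadj
            obtain ⟨hdv, hdD⟩ := Finset.mem_erase.1 hd
            by_cases hdu : d = u
            · rw [hdu, ← ha] at hadj; exact hnadj hadj
            · exact hbpriv d hdD hdu hdv hadj
        rw [h2]
        exact edgeCnt_lt (Finset.erase_subset _ _) hv hu (F.adj_symm huv) (Finset.notMem_erase v D)
      · have h1 : insert a (insert b B) = insert b (D.erase u) := by
          rw [Finset.insert_comm, ha]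
          congr 1
          rw [hBdef]
          exact Finset.insert_erase (Finset.mem_erase.2 ⟨hne'.symm, hv⟩)
        rw [h1]
        have h2 : edgeCnt F (insert b (D.erase u)) = edgeCnt F (D.erase u) := by
          apply edgeCnt_insert
          · intro h; exact hbD (Finset.mem_of_mem_erase h)
          · intro d hd hadj
            obtain ⟨hdu, hdD⟩ := Finset.mem_erase.1 hd
            by_cases hdv : d = v
            · rw [hdv, ← ha] at hadj; exact hnadj hadj
            · exact hbpriv d hdD hdu hdv hadj
        rw [h2]
        exact edgeCnt_lt (Finset.erase_subset _ _) hu hv huv (Finset.notMem_erase u D)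
    -- generic-case edge-count lemma
    have hgen : ∀ a b : V, a ∈ S → b ∈ S → a ≠ b → ¬ F.Adj a b →
        a ≠ u → a ≠ v → b ≠ u → b ≠ v →
        edgeCnt F (insert a (insert b B)) < edgeCnt F D := by
      intro a b haS hbS hab hnadj hau hav hbu hbv
      obtain ⟨haN, haD, hapriv⟩ := hS3 a haS hau hav
      obtain ⟨hbN, hbD, hbpriv⟩ := hS3 b hbS hbu hbv
      have h2 : edgeCnt F (insert a (insert b B)) = edgeCnt F (insert b B) := by
        apply edgeCnt_insert
        · intro h
          rcases Finset.mem_insert.1 h with h' | h'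
          · exact hab h'
          · exact haD (hBsub h')
        · intro d hd hadj
          rcases Finset.mem_insert.1 hd with h' | h'
          · rw [h'] at hadj; exact hnadj (F.adj_symm hadj)
          · obtain ⟨hdD, hdu, hdv⟩ := hBmem d h'
            exact hapriv d hdD hdu hdv hadj
      have h3 : edgeCnt F (insert b B) = edgeCnt F B := by
        apply edgeCnt_insert
        · intro h; exact hbD (hBsub h)
        · intro d hd hadj
          obtain ⟨hdD, hdu, hdv⟩ := hBmem d hd
          exact hbpriv d hdD hdu hdv hadj
      rw [h2, h3]
      exact edgeCnt_lt hBsub hv hu (F.adj_symm huv) hvB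
    -- Key lemma B: no independent pair of S dominates all of S
    have keyB : ∀ a b : V, a ∈ S → b ∈ S → a ≠ b → ¬ F.Adj a b →
        (∀ w ∈ S, w ≠ a → w ≠ b → F.Adj a w ∨ F.Adj b w) → False := by
      intro a b haS hbS hab hnadj hdom2
      set D' : Finset V := insert a (insert b B) with hD'def
      have hdom' : IsDominating F ↑D' := by
        intro w hw
        by_cases hwS : w ∈ S
        · have hwa : w ≠ a := by
            intro h; exact hw (by rw [hD'def, h]; simp)
          have hwb : w ≠ b := by
            intro h; exact hw (by rw [hD'def, h]; simp)
          rcases hdom2 w hwS hwa hwb with h | h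
          · exact ⟨a, by rw [hD'def]; simp, h⟩
          · exact ⟨b, by rw [hD'def]; simp, h⟩
        · by_cases hwD : w ∈ D
          · exfalso
            have hwu : w ≠ u := fun h => hwS (by rw [h]; exact huS)
            have hwv : w ≠ v := fun h => hwS (by rw [h]; exact hvS)
            apply hw
            rw [hD'def]
            simp only [Finset.coe_insert, Set.mem_insert_iff, Finset.mem_coe]
            refine Or.inr (Or.inr ?_)
            rw [hBdef]
            exact Finset.mem_erase.2 ⟨hwv, Finset.mem_erase.2 ⟨hwu, hwD⟩⟩
          · obtain ⟨d, hd, hadj⟩ := hdomaux w hwS (fun h => hwD (Finset.mem_coe.1 h))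
            refine ⟨d, ?_, hadj⟩
            rw [hD'def]
            simp only [Finset.coe_insert, Set.mem_insert_iff, Finset.mem_coe]
            exact Or.inr (Or.inr hd)
      have hcard_le : D'.card ≤ D.card := by
        have h1 : D'.card ≤ (insert b B).card + 1 := by
          rw [hD'def]; exact Finset.card_insert_le _ _
        have h2 : (insert b B).card ≤ B.card + 1 := Finset.card_insert_le _ _
        omega
      have hcard_ge : domNum F ≤ D'.card := domNum_le_card F hdom'
      have hcard : D'.card = domNum F := by omega
      have hlt2 : edgeCnt F D' < edgeCnt F D := by
        rw [hD'def]
        by_cases hau : a = u ∨ a = v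
        · by_cases hbu : b = u ∨ b = v
          · exfalso
            rcases hau with ha | ha <;> rcases hbu with hb | hb
            · exact hab (ha.trans hb.symm)
            · exact hnadj (by rw [ha, hb]; exact huv)
            · exact hnadj (by rw [ha, hb]; exact F.adj_symm huv)
            · exact hab (ha.trans hb.symm)
          · push_neg at hbu
            exact hmix a b hab hnadj hau hbS hbu.1 hbu.2
        · push_neg at hau
          by_cases hbu : b = u ∨ b = v
          · have := hmix b a (Ne.symm hab) (fun h => hnadj (F.adj_symm h)) hbu haS hau.1 hau.2
            rwa [Finset.insert_comm] at this
          · push_neg at hbu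
            exact hgen a b haS hbS hab hnadj hau.1 hau.2 hbu.1 hbu.2
      have hsle : sInf M ≤ edgeCnt F D' := Nat.sInf_le ⟨D', hdom', hcard, rfl⟩
      omega
    -- Now analyze the induced subgraph on S
    have huSS : u ∈ (↑S : Set V) := Finset.mem_coe.2 huS
    have hvSS : v ∈ (↑S : Set V) := Finset.mem_coe.2 hvS
    have hdomH_lb : ∀ Dh : Finset (↥(↑S : Set V)),
        IsDominating (F.induce (↑S : Set V)) ↑Dh → 2 ≤ Dh.card := by
      intro Dh hDh
      by_contra hlt'
      push_neg at hlt'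
      have hcases : Dh.card = 0 ∨ Dh.card = 1 := by omega
      rcases hcases with h0 | h1
      · rw [Finset.card_eq_zero.1 h0] at hDh
        obtain ⟨x, hx, -⟩ := hDh ⟨u, huSS⟩ (by simp)
        simp at hx
      · obtain ⟨c', hc'⟩ := Finset.card_eq_one.1 h1
        rw [hc'] at hDh
        apply keyA c'.1 (Finset.mem_coe.1 c'.2)
        intro w hwS hwc
        have hw' : (⟨w, Finset.mem_coe.2 hwS⟩ : ↥(↑S : Set V)) ∉
            (↑({c'} : Finset (↥(↑S : Set V))) : Set (↥(↑S : Set V))) := by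
          simp only [Finset.coe_singleton, Set.mem_singleton_iff]
          intro h
          exact hwc (congrArg Subtype.val h)
        obtain ⟨x, hx, hadj⟩ := hDh _ hw'
        simp only [Finset.coe_singleton, Set.mem_singleton_iff] at hx
        rw [hx] at hadj
        exact hadj
    have hdomH : domNum (F.induce (↑S : Set V)) = 2 := by
      apply le_antisymm
      · have hdd : IsDominating (F.induce (↑S : Set V))
            ↑({⟨u, huSS⟩, ⟨v, hvSS⟩} : Finset (↥(↑S : Set V))) := by
          intro w hw
          simp only [Finset.coe_insert, Finset.coe_singleton, Set.mem_insert_iff,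
            Set.mem_singleton_iff] at hw
          push_neg at hw
          have hwu : w.1 ≠ u := fun h => hw.1 (Subtype.ext h)
          have hwv : w.1 ≠ v := fun h => hw.2 (Subtype.ext h)
          obtain ⟨hadj, -, -⟩ := hS3 w.1 (Finset.mem_coe.1 w.2) hwu hwv
          rcases hadj with h | h
          · exact ⟨⟨u, huSS⟩, by simp, h⟩
          · exact ⟨⟨v, hvSS⟩, by simp, h⟩
        have := domNum_le_card _ hdd
        have hc2 : ({⟨u, huSS⟩, ⟨v, hvSS⟩} : Finset (↥(↑S : Set V))).card ≤ 2 := by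
          apply le_trans (Finset.card_insert_le _ _)
          simp
        omega
      · obtain ⟨Dh, h1, h2⟩ := exists_min_dominating (F.induce (↑S : Set V))
        rw [← h2]
        exact hdomH_lb Dh h1
    have hindH : 3 ≤ indomNum (F.induce (↑S : Set V)) := by
      obtain ⟨J, hJ, hJc⟩ := exists_min_maxindep (F.induce (↑S : Set V))
      rw [← hJc]
      by_contra hcon
      push_neg at hcon
      have hJdom := maxIndep_dominating _ hJ
      have h2le := hdomH_lb J hJdom
      have hJ2 : J.card = 2 := by omega
      obtain ⟨a', b', hab', hJab⟩ := Finset.card_eq_two.1 hJ2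
      have ha'J : a' ∈ (↑J : Set (↥(↑S : Set V))) := by rw [hJab]; simp
      have hb'J : b' ∈ (↑J : Set (↥(↑S : Set V))) := by rw [hJab]; simp
      apply keyB a'.1 b'.1 (Finset.mem_coe.1 a'.2) (Finset.mem_coe.1 b'.2)
        (fun h => hab' (Subtype.ext h)) (hJ.1 a' ha'J b' hb'J)
      intro w hwS hwa hwb
      have hw' : (⟨w, Finset.mem_coe.2 hwS⟩ : ↥(↑S : Set V)) ∉
          (↑J : Set (↥(↑S : Set V))) := by
        rw [hJab]
        simp only [Finset.coe_insert, Finset.coe_singleton, Set.mem_insert_iff,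
          Set.mem_singleton_iff]
        rintro (h | h)
        · exact hwa (congrArg Subtype.val h)
        · exact hwb (congrArg Subtype.val h)
      obtain ⟨x, hx, hadj⟩ := hJdom _ hw'
      rw [hJab] at hx
      simp only [Finset.coe_insert, Finset.coe_singleton, Set.mem_insert_iff,
        Set.mem_singleton_iff] at hx
      rcases hx with h | h
      · rw [h] at hadj
        exact Or.inl hadj
      · rw [h] at hadj
        exact Or.inr hadj
    -- S must be the whole vertex set
    have hSuniv : S = Finset.univ := by
      by_contra hSne
      have := domPerfect_self _ (hmin.2 S hSne)
      omega
    have hall : ∀ x : V, x ∈ (↑S : Set V) := by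
      intro x
      rw [hSuniv]
      simp
    have hd := domNum_congr (G := F) (G' := F.induce (↑S : Set V))
      (Equiv.subtypeUnivEquiv hall) (fun a b => Iff.rfl)
    have hi := indomNum_congr (G := F) (G' := F.induce (↑S : Set V))
      (Equiv.subtypeUnivEquiv hall) (fun a b => Iff.rfl)
    constructor
    · omega
    · omega
end
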